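/- arXiv:1207.0244 — 2 statements merged into one kernel-verified Lean document; each statement's English description precedes it below -/
import Mathlib

section
/- If n = 3, then the vanishing ideal I(X) of the degenerate projective torus X ⊆ ℙ^2 is minimally generated by at most 3 binomials. -/
open MvPolynomial
set_option linter.unusedSectionVars false

namespace DegTorus

noncomputable section

variable (K : Type) [Field K] [Fintype K]

/-- monomial with exponent vector `a` -/
def mon (a : Fin 3 → ℕ) : MvPolynomial (Fin 3) K := ∏ j, X j ^ a j

variable {K}

lemma mon_eq_monomial (a : Fin 3 → ℕ) :
    mon K a = monomial (Finsupp.equivFunOnFinite.symm a) 1 := by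
  rw [← prod_X_pow_eq_monomial]
  apply (Finset.prod_subset (Finset.subset_univ _) _).symm
  intro x _ hx
  simp only [Finsupp.mem_support_iff, ne_eq, not_not, Finsupp.coe_equivFunOnFinite_symm] at hx ⊢
  simp [hx]

lemma mon_add (a b : Fin 3 → ℕ) : mon K (fun j => a j + b j) = mon K a * mon K b := by
  simp [mon, pow_add, Finset.prod_mul_distrib]

lemma sum_three {M : Type*} [AddCommMonoid M] {i j k : Fin 3} (hij : i ≠ j) (hik : i ≠ k)
    (hjk : j ≠ k) (f : Fin 3 → M) : ∑ m, f m = f i + f j + f k := by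
  fin_cases i <;> fin_cases j <;> fin_cases k <;>
    simp_all [Fin.sum_univ_three] <;> abel

lemma mem_three (m i j k : Fin 3) (hij : i ≠ j) (hik : i ≠ k) (hjk : j ≠ k) :
    m = i ∨ m = j ∨ m = k := by revert m i j k; decide

lemma exists_third (i j : Fin 3) (h : i ≠ j) : ∃ k, k ≠ i ∧ k ≠ j := by
  revert i j; decide

end

end DegTorus

namespace DegTorus

noncomputable section

variable {K : Type} [Field K] [Fintype K] (v : Fin 3 → ℕ) (β : Kˣ)

/-- the order of β^{v i} -/
def dd (i : Fin 3) : ℕ := orderOf (β ^ v i)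

lemma dd_pos (i : Fin 3) : 0 < dd v β i := orderOf_pos _

/-- candidate degrees for the critical binomial at coordinate i -/
def SS (i : Fin 3) : Set ℕ :=
  {n | 0 < n ∧ dd v β i ∣ n ∧
    ∃ c : Fin 3 → ℕ, c i = 0 ∧ (∀ j, dd v β j ∣ c j) ∧ ∑ j, c j = n}

lemma SS_nonempty (i : Fin 3) : (SS v β i).Nonempty := by
  obtain ⟨j, hj⟩ : ∃ j : Fin 3, j ≠ i := by
    revert i; decide
  refine ⟨Nat.lcm (dd v β i) (dd v β j), ?_, Nat.dvd_lcm_left _ _,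
    fun m => if m = j then Nat.lcm (dd v β i) (dd v β j) else 0, by simp [hj.symm], ?_, ?_⟩
  · exact Nat.pos_of_ne_zero (Nat.lcm_ne_zero (dd_pos v β i).ne' (dd_pos v β j).ne')
  · intro m
    by_cases hm : m = j <;> simp [hm, Nat.dvd_lcm_right]
  · simp

/-- the critical degree at coordinate i -/
def sc (i : Fin 3) : ℕ := sInf (SS v β i)

lemma sc_mem (i : Fin 3) : sc v β i ∈ SS v β i := Nat.sInf_mem (SS_nonempty v β i)

lemma sc_le {i : Fin 3} {n : ℕ} (h : n ∈ SS v β i) : sc v β i ≤ n := Nat.sInf_le h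

lemma sc_pos (i : Fin 3) : 0 < sc v β i := (sc_mem v β i).1

lemma dd_dvd_sc (i : Fin 3) : dd v β i ∣ sc v β i := (sc_mem v β i).2.1

/-- the complementary exponent vector of the critical binomial at i -/
def addv (i : Fin 3) : Fin 3 → ℕ := (sc_mem v β i).2.2.choose

lemma addv_apply_self (i : Fin 3) : addv v β i i = 0 := (sc_mem v β i).2.2.choose_spec.1

lemma dd_dvd_addv (i j : Fin 3) : dd v β j ∣ addv v β i j :=
  (sc_mem v β i).2.2.choose_spec.2.1 j

lemma sum_addv (i : Fin 3) : ∑ j, addv v β i j = sc v β i :=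
  (sc_mem v β i).2.2.choose_spec.2.2

variable (K)

/-- single exponent vector -/
def sngl (i : Fin 3) (n : ℕ) : Fin 3 → ℕ := fun j => if j = i then n else 0

/-- the critical binomial generators -/
def gen (i : Fin 3) : MvPolynomial (Fin 3) K :=
  mon K (sngl i (sc v β i)) - mon K (addv v β i)

/-- the generating finset -/
def G0 : Finset (MvPolynomial (Fin 3) K) :=
  letI := Classical.decEq (MvPolynomial (Fin 3) K)
  {gen K v β 0, gen K v β 1, gen K v β 2}

/-- the binomial-connectedness relation -/
def Rel (a b : Fin 3 → ℕ) : Prop :=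
  mon K a - mon K b ∈ Ideal.span ((G0 K v β : Finset _) : Set (MvPolynomial (Fin 3) K))

variable {K v β}

lemma Rel.refl (a : Fin 3 → ℕ) : Rel K v β a a := by
  simp [Rel, Submodule.zero_mem]

lemma Rel.symm {a b} (h : Rel K v β a b) : Rel K v β b a := by
  have := Submodule.neg_mem _ h
  simpa [Rel, neg_sub] using this

lemma Rel.trans {a b c} (h1 : Rel K v β a b) (h2 : Rel K v β b c) : Rel K v β a c := by
  have := Ideal.add_mem _ h1 h2
  simpa [Rel, sub_add_sub_cancel] using this

lemma Rel.add {a b} (h : Rel K v β a b) (c : Fin 3 → ℕ) :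
    Rel K v β (fun j => a j + c j) (fun j => b j + c j) := by
  have := Ideal.mul_mem_right (mon K c) _ h
  rw [sub_mul, ← mon_add, ← mon_add] at this
  exact this

lemma rel_gen (i : Fin 3) : Rel K v β (sngl i (sc v β i)) (addv v β i) := by
  apply Ideal.subset_span
  show gen K v β i ∈ _
  fin_cases i <;> simp [G0]

end

end DegTorus

namespace DegTorus

noncomputable section
variable {K : Type} [Field K] [Fintype K] {v : Fin 3 → ℕ} {β : Kˣ}

/-- the fiber equivalence -/
def Sim (d : Fin 3 → ℕ) (a b : Fin 3 → ℕ) : Prop :=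
  (∑ j, a j = ∑ j, b j) ∧ ∀ i, a i ≡ b i [MOD d i]

lemma Sim.refl (d : Fin 3 → ℕ) (a : Fin 3 → ℕ) : Sim d a a := ⟨rfl, fun _ => Nat.ModEq.refl _⟩

lemma Sim.symm {d a b} (h : Sim d a b) : Sim d b a :=
  ⟨h.1.symm, fun i => (h.2 i).symm⟩

lemma Sim.trans {d a b c} (h1 : Sim d a b) (h2 : Sim d b c) : Sim d a c :=
  ⟨h1.1.trans h2.1, fun i => (h1.2 i).trans (h2.2 i)⟩

lemma sum_sngl (i : Fin 3) (n : ℕ) : ∑ j, sngl i n j = n := by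
  simp [sngl]

/-- the key step: the critical move at `i` -/
lemma crit_step {i : Fin 3} {N : ℕ} (hN : sc v β i ≤ N) :
    Rel K v β (sngl i N) (fun j => addv v β i j + sngl i (N - sc v β i) j) ∧
    Sim (dd v β) (sngl i N) (fun j => addv v β i j + sngl i (N - sc v β i) j) := by
  constructor
  · have h := (rel_gen (K := K) (v := v) (β := β) i).add (sngl i (N - sc v β i))
    have e1 : (fun j => sngl i (sc v β i) j + sngl i (N - sc v β i) j) = sngl i N := by
      funext j
      by_cases hj : j = i <;> simp [sngl, hj] <;> omega
    rw [e1] at h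
    exact h
  · constructor
    · rw [sum_sngl, Finset.sum_add_distrib, sum_addv, sum_sngl]
      omega
    · intro m
      by_cases hm : m = i
      · subst hm
        simp only [sngl, if_pos rfl, addv_apply_self, zero_add]
        have h1 : N - sc v β m ≡ N - sc v β m + sc v β m [MOD dd v β m] := by
          have := (Nat.modEq_zero_iff_dvd.mpr (dd_dvd_sc v β m)).symm.add_left (N - sc v β m)
          simpa using this
        have h2 : N - sc v β m + sc v β m = N := by omega
        rw [h2] at h1
        exact h1.symm
      · simp only [sngl, if_neg hm, add_zero]
        exact (Nat.modEq_zero_iff_dvd.mpr (dd_dvd_addv v β i m)).symm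

end

end DegTorus

namespace DegTorus

noncomputable section
variable {K : Type} [Field K] [Fintype K] {v : Fin 3 → ℕ} {β : Kˣ}

theorem rel_of_sim : ∀ (e : ℕ) (a b : Fin 3 → ℕ), ∑ j, a j = e → Sim (dd v β) a b →
    Rel K v β a b := by
  intro e
  induction e using Nat.strong_induction_on with
  | _ e IH =>
  have cancel : ∀ a b : Fin 3 → ℕ, ∑ j, a j = e → Sim (dd v β) a b →
      ∀ m, 0 < a m → 0 < b m → Rel K v β a b := by
    intro a b hs hsim m ham hbm
    have he : 0 < e := by
      have := Finset.single_le_sum (f := a) (fun j _ => Nat.zero_le _) (Finset.mem_univ m)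
      omega
    set a' : Fin 3 → ℕ := fun j => a j - sngl m 1 j with ha'
    set b' : Fin 3 → ℕ := fun j => b j - sngl m 1 j with hb'
    have haa : a = fun j => a' j + sngl m 1 j := by
      funext j; by_cases hj : j = m <;> simp [ha', sngl, hj] <;> omega
    have hbb : b = fun j => b' j + sngl m 1 j := by
      funext j; by_cases hj : j = m <;> simp [hb', sngl, hj] <;> omega
    have hsa : ∑ j, a' j = e - 1 := by
      have : ∑ j, a j = ∑ j, a' j + 1 := by
        conv_lhs => rw [haa]
        rw [Finset.sum_add_distrib, sum_sngl]
      omega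
    have hsb : ∑ j, b' j = e - 1 := by
      have : ∑ j, b j = ∑ j, b' j + 1 := by
        conv_lhs => rw [hbb]
        rw [Finset.sum_add_distrib, sum_sngl]
      have h3 : ∑ j, b j = e := by rw [← hsim.1, hs]
      omega
    have hsim' : Sim (dd v β) a' b' := by
      constructor
      · rw [hsa, hsb]
      · intro x
        by_cases hx : x = m
        · subst hx
          have h1 : a' x + 1 ≡ b' x + 1 [MOD dd v β x] := by
            have e1 : a' x + 1 = a x := by simp [ha', sngl]; omega
            have e2 : b' x + 1 = b x := by simp [hb', sngl]; omega
            rw [e1, e2]; exact hsim.2 x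
          exact h1.add_right_cancel' 1
        · have e1 : a' x = a x := by simp [ha', sngl, hx]
          have e2 : b' x = b x := by simp [hb', sngl, hx]
          rw [e1, e2]; exact hsim.2 x
    have hrel' := IH (e - 1) (by omega) a' b' hsa hsim'
    have := hrel'.add (sngl m 1)
    rw [← haa, ← hbb] at this
    exact this
  intro a b hsum hsim
  by_cases hab : a = b
  · subst hab; exact Rel.refl a
  by_cases hcom : ∃ m, 0 < a m ∧ 0 < b m
  · obtain ⟨m, h1, h2⟩ := hcom
    exact cancel a b hsum hsim m h1 h2
  push_neg at hcom
  have hdisj : ∀ m, a m = 0 ∨ b m = 0 := by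
    intro m
    rcases Nat.eq_zero_or_pos (a m) with h | h
    · exact Or.inl h
    · exact Or.inr (by have := hcom m h; omega)
  have hbsum : ∑ j, b j = e := by rw [← hsim.1, hsum]
  have he : 0 < e := by
    rcases Nat.eq_zero_or_pos e with h | h
    · exfalso
      apply hab
      funext m
      have h1 := Finset.sum_eq_zero_iff.mp (hsum.trans h)
      have h2 := Finset.sum_eq_zero_iff.mp (hbsum.trans h)
      rw [h1 m (Finset.mem_univ m), h2 m (Finset.mem_univ m)]
    · exact h
  obtain ⟨i, hai⟩ : ∃ i, 0 < a i := by
    by_contra h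
    push_neg at h
    have : ∑ j, a j = 0 := Finset.sum_eq_zero (fun j _ => by have := h j; omega)
    omega
  have hbi : b i = 0 := by rcases hdisj i with h | h; omega; exact h
  obtain ⟨j, hbj⟩ : ∃ j, 0 < b j := by
    by_contra h
    push_neg at h
    have : ∑ j, b j = 0 := Finset.sum_eq_zero (fun j _ => by have := h j; omega)
    omega
  have haj : a j = 0 := by rcases hdisj j with h | h; exact h; omega
  have hij : i ≠ j := by rintro rfl; omega
  obtain ⟨k, hki, hkj⟩ := exists_third i j hij
  have hik : i ≠ k := hki.symm
  have hjk : j ≠ k := hkj.symm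
  -- case C : both a and b are pure powers
  have caseC : a k = 0 → b k = 0 → Rel K v β a b := by
    intro hak hbk
    have hae : a i = e := by
      have := sum_three hij hik hjk a; omega
    have hbe : b j = e := by
      have := sum_three hij hik hjk b; omega
    have haf : a = sngl i e := by
      funext m
      rcases mem_three m i j k hij hik hjk with rfl | rfl | rfl
      · simp [sngl, hae]
      · simp [sngl, Ne.symm hij, haj]
      · simp [sngl, Ne.symm hik, hak]
    have hbf : b = sngl j e := by
      funext m
      rcases mem_three m i j k hij hik hjk with rfl | rfl | rfl
      · simp [sngl, hij, hbi]
      · simp [sngl, hbe]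
      · simp [sngl, Ne.symm hjk, hbk]
    have hSi : e ∈ SS v β i := by
      refine ⟨he, ?_, b, hbi, ?_, hbsum⟩
      · have := hsim.2 i
        rw [hbi, hae] at this
        exact Nat.modEq_zero_iff_dvd.mp this
      · intro m
        rcases mem_three m i j k hij hik hjk with rfl | rfl | rfl
        · rw [hbi]; exact dvd_zero _
        · have := hsim.2 m; rw [haj] at this
          exact Nat.modEq_zero_iff_dvd.mp this.symm
        · rw [hbk]; exact dvd_zero _
    have hSj : e ∈ SS v β j := by
      refine ⟨he, ?_, a, haj, ?_, hsum⟩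
      · have := hsim.2 j
        rw [haj, hbe] at this
        exact Nat.modEq_zero_iff_dvd.mp this.symm
      · intro m
        rcases mem_three m i j k hij hik hjk with rfl | rfl | rfl
        · have := hsim.2 m; rw [hbi] at this
          exact Nat.modEq_zero_iff_dvd.mp this
        · rw [haj]; exact dvd_zero _
        · rw [hak]; exact dvd_zero _
    obtain ⟨hrelA, hsimA⟩ := crit_step (K := K) (i := i) (N := e) (sc_le v β hSi)
    obtain ⟨hrelB, hsimB⟩ := crit_step (K := K) (i := j) (N := e) (sc_le v β hSj)
    set a'' : Fin 3 → ℕ := fun m => addv v β i m + sngl i (e - sc v β i) m with ha''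
    set b'' : Fin 3 → ℕ := fun m => addv v β j m + sngl j (e - sc v β j) m with hb''
    have hsuma'' : ∑ m, a'' m = e := by rw [← hsimA.1, sum_sngl]
    have hsumb'' : ∑ m, b'' m = e := by rw [← hsimB.1, sum_sngl]
    by_cases h1 : 0 < addv v β i j
    · have hcomj : 0 < a'' j := by
        have : a'' j = addv v β i j + sngl i (e - sc v β i) j := rfl
        simp only [sngl, if_neg (Ne.symm hij)] at this
        omega
      have hbj' : 0 < b j := hbj
      have hrel1 : Rel K v β a a'' := by rw [haf]; exact hrelA
      have hsim1 : Sim (dd v β) a'' b := by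
        refine Sim.trans (Sim.symm hsimA) ?_
        rw [← haf]; exact hsim
      exact hrel1.trans (cancel a'' b hsuma'' hsim1 j hcomj hbj')
    · by_cases h2 : 0 < addv v β j i
      · have hcomi : 0 < b'' i := by
          have : b'' i = addv v β j i + sngl j (e - sc v β j) i := rfl
          simp only [sngl, if_neg hij] at this
          omega
        have hrel2 : Rel K v β b b'' := by rw [hbf]; exact hrelB
        have hsim2 : Sim (dd v β) a b'' := by
          refine Sim.trans hsim ?_
          rw [hbf]; exact hsimB
        have hai' : 0 < a i := hai
        exact (cancel a b'' hsum hsim2 i hai' hcomi).trans hrel2.symm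
      · have haddik : addv v β i k = sc v β i := by
          have h3 := sum_three hij hik hjk (addv v β i)
          rw [sum_addv, addv_apply_self] at h3
          omega
        have haddjk : addv v β j k = sc v β j := by
          have h3 := sum_three hij hik hjk (addv v β j)
          rw [sum_addv] at h3
          have h4 := addv_apply_self v β j
          omega
        have hak'' : 0 < a'' k := by
          have : a'' k = addv v β i k + sngl i (e - sc v β i) k := rfl
          simp only [sngl, if_neg (Ne.symm hik)] at this
          rw [haddik] at this
          have := sc_pos v β i
          omega
        have hbk'' : 0 < b'' k := by
          have : b'' k = addv v β j k + sngl j (e - sc v β j) k := rfl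
          simp only [sngl, if_neg (Ne.symm hjk)] at this
          rw [haddjk] at this
          have := sc_pos v β j
          omega
        have hsimab : Sim (dd v β) a'' b'' := by
          refine Sim.trans (Sim.symm hsimA) (Sim.trans ?_ hsimB)
          rw [← haf, ← hbf]; exact hsim
        have hrel1 : Rel K v β a a'' := by rw [haf]; exact hrelA
        have hrel2 : Rel K v β b b'' := by rw [hbf]; exact hrelB
        exact hrel1.trans ((cancel a'' b'' hsuma'' hsimab k hak'' hbk'').trans hrel2.symm)
  rcases hdisj k with hak | hbk
  · rcases Nat.eq_zero_or_pos (b k) with hbk0 | hbk0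
    · exact caseC hak hbk0
    · -- case A : a is a pure power, b has two positive coordinates
      have hae : a i = e := by
        have := sum_three hij hik hjk a; omega
      have haf : a = sngl i e := by
        funext m
        rcases mem_three m i j k hij hik hjk with rfl | rfl | rfl
        · simp [sngl, hae]
        · simp [sngl, Ne.symm hij, haj]
        · simp [sngl, Ne.symm hik, hak]
      have hSi : e ∈ SS v β i := by
        refine ⟨he, ?_, b, hbi, ?_, hbsum⟩
        · have := hsim.2 i
          rw [hbi, hae] at this
          exact Nat.modEq_zero_iff_dvd.mp this
        · intro m
          rcases mem_three m i j k hij hik hjk with rfl | rfl | rfl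
          · rw [hbi]; exact dvd_zero _
          · have := hsim.2 m; rw [haj] at this
            exact Nat.modEq_zero_iff_dvd.mp this.symm
          · have := hsim.2 m; rw [hak] at this
            exact Nat.modEq_zero_iff_dvd.mp this.symm
      obtain ⟨hrelA, hsimA⟩ := crit_step (K := K) (i := i) (N := e) (sc_le v β hSi)
      set a'' : Fin 3 → ℕ := fun m => addv v β i m + sngl i (e - sc v β i) m with ha''
      have hsuma'' : ∑ m, a'' m = e := by rw [← hsimA.1, sum_sngl]
      obtain ⟨m, hm, hmne⟩ : ∃ m, 0 < addv v β i m ∧ m ≠ i := by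
        have hne : ∑ m, addv v β i m ≠ 0 := by
          rw [sum_addv]; exact (sc_pos v β i).ne'
        obtain ⟨m, _, hm⟩ := Finset.exists_ne_zero_of_sum_ne_zero hne
        refine ⟨m, Nat.pos_of_ne_zero hm, ?_⟩
        intro hmi
        exact hm (by rw [hmi]; exact addv_apply_self v β i)
      have hbm : 0 < b m := by
        rcases mem_three m i j k hij hik hjk with rfl | rfl | rfl
        · exact absurd rfl hmne
        · exact hbj
        · exact hbk0
      have ham'' : 0 < a'' m := by
        have : a'' m = addv v β i m + sngl i (e - sc v β i) m := rfl
        omega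
      have hrel1 : Rel K v β a a'' := by rw [haf]; exact hrelA
      have hsim1 : Sim (dd v β) a'' b := by
        refine Sim.trans (Sim.symm hsimA) ?_
        rw [← haf]; exact hsim
      exact hrel1.trans (cancel a'' b hsuma'' hsim1 m ham'' hbm)
  · rcases Nat.eq_zero_or_pos (a k) with hak0 | hak0
    · exact caseC hak0 hbk
    · -- case B : b is a pure power, a has two positive coordinates
      have hbe : b j = e := by
        have := sum_three hij hik hjk b; omega
      have hbf : b = sngl j e := by
        funext m
        rcases mem_three m i j k hij hik hjk with rfl | rfl | rfl
        · simp [sngl, hij, hbi]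
        · simp [sngl, hbe]
        · simp [sngl, Ne.symm hjk, hbk]
      have hSj : e ∈ SS v β j := by
        refine ⟨he, ?_, a, haj, ?_, hsum⟩
        · have := hsim.2 j
          rw [haj, hbe] at this
          exact Nat.modEq_zero_iff_dvd.mp this.symm
        · intro m
          rcases mem_three m i j k hij hik hjk with rfl | rfl | rfl
          · have := hsim.2 m; rw [hbi] at this
            exact Nat.modEq_zero_iff_dvd.mp this
          · rw [haj]; exact dvd_zero _
          · have := hsim.2 m; rw [hbk] at this
            exact Nat.modEq_zero_iff_dvd.mp this
      obtain ⟨hrelB, hsimB⟩ := crit_step (K := K) (i := j) (N := e) (sc_le v β hSj)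
      set b'' : Fin 3 → ℕ := fun m => addv v β j m + sngl j (e - sc v β j) m with hb''
      obtain ⟨m, hm, hmne⟩ : ∃ m, 0 < addv v β j m ∧ m ≠ j := by
        have hne : ∑ m, addv v β j m ≠ 0 := by
          rw [sum_addv]; exact (sc_pos v β j).ne'
        obtain ⟨m, _, hm⟩ := Finset.exists_ne_zero_of_sum_ne_zero hne
        refine ⟨m, Nat.pos_of_ne_zero hm, ?_⟩
        intro hmj
        exact hm (by rw [hmj]; exact addv_apply_self v β j)
      have ham : 0 < a m := by
        rcases mem_three m i j k hij hik hjk with rfl | rfl | rfl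
        · exact hai
        · exact absurd rfl hmne
        · exact hak0
      have hbm'' : 0 < b'' m := by
        have : b'' m = addv v β j m + sngl j (e - sc v β j) m := rfl
        omega
      have hrel2 : Rel K v β b b'' := by rw [hbf]; exact hrelB
      have hsim2 : Sim (dd v β) a b'' := by
        refine Sim.trans hsim ?_
        rw [hbf]; exact hsimB
      exact (cancel a b'' hsum hsim2 m ham hbm'').trans hrel2.symm

end

end DegTorus

namespace DegTorus

noncomputable section
variable {K : Type} [Field K] [Fintype K] {v : Fin 3 → ℕ} {β : Kˣ}

lemma unitpow (hβ : ∀ x : Kˣ, x ∈ Subgroup.zpowers β) (x : Kˣ) (i : Fin 3) {n : ℕ}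
    (hn : dd v β i ∣ n) : (x ^ v i) ^ n = 1 := by
  obtain ⟨m, hm0⟩ := hβ x
  have hm : β ^ m = x := hm0
  have hdd : ((β ^ v i) ^ dd v β i : Kˣ) = 1 := pow_orderOf_eq_one _
  have hd : (x ^ v i) ^ dd v β i = 1 := by
    calc (x ^ v i) ^ dd v β i = x ^ (v i * dd v β i) := (pow_mul _ _ _).symm
      _ = (β ^ m) ^ ((v i * dd v β i : ℕ) : ℤ) := by rw [hm, zpow_natCast]
      _ = (β ^ ((v i * dd v β i : ℕ) : ℤ)) ^ m := by
          rw [← zpow_mul, ← zpow_mul, mul_comm]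
      _ = ((β ^ v i) ^ dd v β i : Kˣ) ^ m := by rw [zpow_natCast, pow_mul]
      _ = 1 := by rw [hdd, one_zpow]
  obtain ⟨t, rfl⟩ := hn
  rw [pow_mul, hd, one_pow]

lemma eval_mon (x : Fin 3 → Kˣ) (a : Fin 3 → ℕ) :
    eval (fun i => ((x i : K)) ^ v i) (mon K a) = ∏ j, ((x j : K) ^ (v j * a j)) := by
  simp [mon, pow_mul]

/-- the character attached to the exponent vector `a` -/
def chr (v : Fin 3 → ℕ) (a : Fin 3 → ℕ) : (Fin 3 → Kˣ) →* K where
  toFun x := ∏ j, ((x j : K) ^ (v j * a j))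
  map_one' := by
    simp only [Pi.one_apply, Units.val_one, one_pow, Finset.prod_const_one]
  map_mul' x y := by
    simp only [Pi.mul_apply, Units.val_mul, mul_pow, Finset.prod_mul_distrib]

lemma chr_apply (a : Fin 3 → ℕ) (x : Fin 3 → Kˣ) :
    chr v (K := K) a x = ∏ j, ((x j : K) ^ (v j * a j)) := rfl

lemma chr_eq_of_modEq (hβ : ∀ x : Kˣ, x ∈ Subgroup.zpowers β) {a b : Fin 3 → ℕ}
    (h : ∀ i, a i ≡ b i [MOD dd v β i]) : chr v (K := K) a = chr v (K := K) b := by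
  refine MonoidHom.ext fun x => ?_
  show (∏ j, ((x j : K) ^ (v j * a j))) = ∏ j, ((x j : K) ^ (v j * b j))
  apply Finset.prod_congr rfl
  intro j _
  have hy : ((x j ^ v j : Kˣ) ^ dd v β j) = 1 := unitpow hβ (x j) j dvd_rfl
  have hord : orderOf (x j ^ v j : Kˣ) ∣ dd v β j := orderOf_dvd_of_pow_eq_one hy
  have hmod : a j ≡ b j [MOD orderOf (x j ^ v j : Kˣ)] := (h j).of_dvd hord
  have : (x j ^ v j : Kˣ) ^ a j = (x j ^ v j : Kˣ) ^ b j := pow_eq_pow_iff_modEq.mpr hmod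
  have := congrArg (Units.val) this
  push_cast at this
  rw [← pow_mul, ← pow_mul] at this
  exact this

lemma modEq_of_chr_eq {a b : Fin 3 → ℕ} (h : chr v (K := K) a = chr v (K := K) b) (i : Fin 3) :
    a i ≡ b i [MOD dd v β i] := by
  have hx := congrFun (congrArg (fun f : (Fin 3 → Kˣ) →* K => (f : (Fin 3 → Kˣ) → K)) h)
    (Function.update (1 : Fin 3 → Kˣ) i β)
  simp only [chr_apply] at hx
  have key : ∀ c : Fin 3 → ℕ,
      (∏ j, (((Function.update (1 : Fin 3 → Kˣ) i β j : Kˣ) : K) ^ (v j * c j)))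
        = ((β ^ (v i * c i) : Kˣ) : K) := by
    intro c
    rw [Finset.prod_eq_single i]
    · simp [Function.update]
    · intro j _ hj
      simp [Function.update, hj]
    · simp
  rw [key a, key b] at hx
  have hu : (β ^ (v i * a i) : Kˣ) = β ^ (v i * b i) := Units.ext hx
  rw [pow_mul, pow_mul] at hu
  exact pow_eq_pow_iff_modEq.mp hu

lemma class_sum_zero [DecidableEq ((Fin 3 → Kˣ) →* K)] (T : Finset (Fin 3 →₀ ℕ)) (c : (Fin 3 →₀ ℕ) → K)
    (h0 : ∀ x : Fin 3 → Kˣ, ∑ a ∈ T, c a * chr v (K := K) (fun i => a i) x = 0)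
    {a₀ : Fin 3 →₀ ℕ} (ha₀ : a₀ ∈ T) :
    ∑ a ∈ T.filter (fun a => chr v (K := K) (fun i => a i) = chr v (K := K) (fun i => a₀ i)), c a = 0 := by
  classical
  set Φ := T.image (fun a => chr v (K := K) (fun i => a i)) with hΦ
  set g : ((Fin 3 → Kˣ) →* K) → K :=
    fun φ => ∑ a ∈ T.filter (fun a => chr v (K := K) (fun i => a i) = φ), c a with hg
  have key : ∑ φ ∈ Φ, g φ • (φ : (Fin 3 → Kˣ) → K) = 0 := by
    funext x
    have e1 : (∑ φ ∈ Φ, g φ • (φ : (Fin 3 → Kˣ) → K)) x = ∑ φ ∈ Φ, g φ * φ x := by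
      simp [Finset.sum_apply]
    rw [e1]
    have e2 : ∀ φ ∈ Φ, g φ * φ x
        = ∑ a ∈ T.filter (fun a => chr v (K := K) (fun i => a i) = φ), c a * chr v (K := K) (fun i => a i) x := by
      intro φ _
      rw [hg, Finset.sum_mul]
      apply Finset.sum_congr rfl
      intro a ha
      rw [(Finset.mem_filter.mp ha).2]
    rw [Finset.sum_congr rfl e2, Finset.sum_fiberwise_of_maps_to (fun a ha => Finset.mem_image_of_mem _ ha)]
    · exact (h0 x).trans rfl
  have li := linearIndependent_iff'.mp
    (linearIndependent_monoidHom (Fin 3 → Kˣ) K) Φ g key (chr v (K := K) (fun i => a₀ i))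
    (Finset.mem_image_of_mem _ ha₀)
  exact li

end

end DegTorus

namespace DegTorus

noncomputable section
variable {K : Type} [Field K] [Fintype K] {v : Fin 3 → ℕ} {β : Kˣ}

lemma degree_eq_sum (u : Fin 3 →₀ ℕ) : u.degree = ∑ j, u j := by
  rw [Finsupp.degree]
  exact Finset.sum_subset (Finset.subset_univ _)
    (fun x _ hx => Finsupp.notMem_support_iff.mp hx)

lemma homog_support_sum {f : MvPolynomial (Fin 3) K} {e : ℕ} (h : f.IsHomogeneous e)
    {u : Fin 3 →₀ ℕ} (hu : u ∈ f.support) : ∑ j, u j = e := by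
  have h1 := h (MvPolynomial.mem_support_iff.mp hu)
  rw [← degree_eq_sum, Finsupp.degree_eq_weight_one]
  exact h1

lemma mon_homogeneous (a : Fin 3 → ℕ) : (mon K a).IsHomogeneous (∑ j, a j) := by
  rw [mon_eq_monomial]
  apply isHomogeneous_monomial
  rw [degree_eq_sum]
  simp

lemma factor_one (hβ : ∀ x : Kˣ, x ∈ Subgroup.zpowers β) (x : Kˣ) (i : Fin 3) {c : ℕ}
    (hc : dd v β i ∣ c) : ((x : K)) ^ (v i * c) = 1 := by
  have h := unitpow hβ x i hc
  have : ((x ^ v i : Kˣ) ^ c : Kˣ) = (1 : Kˣ) := h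
  have h2 := congrArg Units.val this
  push_cast at h2
  rwa [← pow_mul] at h2

lemma eval_mon_one (hβ : ∀ x : Kˣ, x ∈ Subgroup.zpowers β) (x : Fin 3 → Kˣ) {c : Fin 3 → ℕ}
    (hc : ∀ j, dd v β j ∣ c j) :
    eval (fun i => ((x i : K)) ^ v i) (mon K c) = 1 := by
  rw [eval_mon]
  apply Finset.prod_eq_one
  intro j _
  exact factor_one hβ (x j) j (hc j)

lemma gen_homog (i : Fin 3) : (gen K v β i).IsHomogeneous (sc v β i) := by
  have h1 := mon_homogeneous (K := K) (sngl i (sc v β i))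
  have h2 := mon_homogeneous (K := K) (addv v β i)
  rw [sum_sngl] at h1
  rw [sum_addv] at h2
  exact h1.sub h2

lemma gen_vanish (hβ : ∀ x : Kˣ, x ∈ Subgroup.zpowers β) (i : Fin 3) (x : Fin 3 → Kˣ) :
    eval (fun m => ((x m : K)) ^ v m) (gen K v β i) = 0 := by
  unfold gen
  rw [map_sub, eval_mon_one hβ, eval_mon_one hβ, sub_self]
  · exact fun j => dd_dvd_addv v β i j
  · intro j
    by_cases hj : j = i
    · subst hj; simpa [sngl] using dd_dvd_sc v β j
    · simp [sngl, hj]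

lemma eval_eq_sum_chr (f : MvPolynomial (Fin 3) K) (x : Fin 3 → Kˣ) :
    eval (fun i => ((x i : K)) ^ v i) f
      = ∑ a ∈ f.support, coeff a f * chr v (K := K) (fun i => a i) x := by
  conv_lhs => rw [f.as_sum]
  rw [map_sum]
  apply Finset.sum_congr rfl
  intro a _
  rw [eval_monomial]
  congr 1
  rw [Finsupp.prod_fintype _ _ (fun i => pow_zero _)]
  rw [chr_apply]
  apply Finset.prod_congr rfl
  intro j _
  rw [pow_mul]

end

end DegTorus

namespace DegTorus

noncomputable section
variable {K : Type} [Field K] [Fintype K] {v : Fin 3 → ℕ} {β : Kˣ}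

lemma mem_span_of_vanish (hβ : ∀ x : Kˣ, x ∈ Subgroup.zpowers β) :
    ∀ (n : ℕ) (f : MvPolynomial (Fin 3) K), f.support.card = n →
    (∃ e, f.IsHomogeneous e) →
    (∀ x : Fin 3 → Kˣ, eval (fun i => ((x i : K)) ^ v i) f = 0) →
    f ∈ Ideal.span ((G0 K v β : Finset (MvPolynomial (Fin 3) K)) : Set (MvPolynomial (Fin 3) K)) := by
  classical
  intro n
  induction n using Nat.strong_induction_on with
  | _ n IH =>
  intro f hcard hhom hvan
  rcases Finset.eq_empty_or_nonempty f.support with hemp | ⟨a₀, ha₀⟩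
  · rw [MvPolynomial.support_eq_empty.mp hemp]
    exact Ideal.zero_mem _
  obtain ⟨e, hhom⟩ := hhom
  set C := f.support.filter
    (fun a => chr v (K := K) (fun i => a i) = chr v (K := K) (fun i => a₀ i)) with hC
  have ha₀C : a₀ ∈ C := Finset.mem_filter.mpr ⟨ha₀, rfl⟩
  have hCsub : C ⊆ f.support := Finset.filter_subset _ _
  have hCsum : ∑ a ∈ C, coeff a f = 0 := by
    apply class_sum_zero f.support (fun a => coeff a f) _ ha₀
    intro x
    rw [← eval_eq_sum_chr]
    exact hvan x
  -- the binomial part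
  have hbin : ∀ a ∈ C, mon K (fun i => a i) - mon K (fun i => a₀ i)
      ∈ Ideal.span ((G0 K v β : Finset (MvPolynomial (Fin 3) K)) : Set _) := by
    intro a ha
    have hchr := (Finset.mem_filter.mp ha).2
    have hsimab : Sim (dd v β) (fun i => a i) (fun i => a₀ i) := by
      constructor
      · rw [homog_support_sum hhom (hCsub ha), homog_support_sum hhom ha₀]
      · exact modEq_of_chr_eq hchr
    exact rel_of_sim (∑ j, a j) (fun i => a i) (fun i => a₀ i) rfl hsimab
  set g : MvPolynomial (Fin 3) K := ∑ a ∈ C, monomial a (coeff a f) with hg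
  have hgmem : g ∈ Ideal.span ((G0 K v β : Finset (MvPolynomial (Fin 3) K)) : Set _) := by
    have hrw : g = (∑ a ∈ C, coeff a f • (mon K (fun i => a i) - mon K (fun i => a₀ i)))
        + (∑ a ∈ C, coeff a f) • mon K (fun i => a₀ i) := by
      rw [Finset.sum_smul, ← Finset.sum_add_distrib]
      apply Finset.sum_congr rfl
      intro a _
      rw [smul_sub, sub_add_cancel, mon_eq_monomial, Finsupp.equivFunOnFinite_symm_coe,
        MvPolynomial.smul_monomial, smul_eq_mul, mul_one]
    rw [hrw, hCsum, zero_smul, add_zero]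
    refine Submodule.sum_mem _ (fun a ha => ?_)
    rw [MvPolynomial.smul_eq_C_mul]
    exact Ideal.mul_mem_left _ _ (hbin a ha)
  have hcoeff : ∀ b, coeff b (f - g) = if b ∈ C then 0 else coeff b f := by
    intro b
    rw [MvPolynomial.coeff_sub, hg, MvPolynomial.coeff_sum]
    have : ∀ a ∈ C, coeff b (monomial a (coeff a f)) = if a = b then coeff a f else 0 :=
      fun a _ => MvPolynomial.coeff_monomial _ _ _
    rw [Finset.sum_congr rfl this, Finset.sum_ite_eq' C b (fun a => coeff a f)]
    by_cases hb : b ∈ C <;> simp [hb]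
  have hsupp : (f - g).support = f.support \ C := by
    ext b
    simp only [MvPolynomial.mem_support_iff, Finset.mem_sdiff, hcoeff b]
    by_cases hb : b ∈ C
    · simp [hb]
    · simp only [if_neg hb, hb]
      tauto
  have hcard' : (f - g).support.card < n := by
    rw [hsupp, ← hcard]
    exact Finset.card_lt_card (Finset.sdiff_ssubset hCsub ⟨a₀, ha₀C⟩)
  have hhom' : (f - g).IsHomogeneous e := by
    intro d hd
    apply hhom
    rw [hcoeff d] at hd
    by_cases hdC : d ∈ C
    · rw [if_pos hdC] at hd; exact absurd rfl hd
    · rwa [if_neg hdC] at hd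
  have hvan' : ∀ x : Fin 3 → Kˣ, eval (fun i => ((x i : K)) ^ v i) (f - g) = 0 := by
    intro x
    rw [map_sub, hvan x, zero_sub, neg_eq_zero, hg, map_sum]
    have : ∀ a ∈ C, eval (fun i => ((x i : K)) ^ v i) (monomial a (coeff a f))
        = coeff a f * chr v (K := K) (fun i => a₀ i) x := by
      intro a ha
      have h1 : eval (fun i => ((x i : K)) ^ v i) (monomial a (coeff a f))
          = coeff a f * chr v (K := K) (fun i => a i) x := by
        rw [eval_monomial]
        congr 1
        rw [Finsupp.prod_fintype _ _ (fun i => pow_zero _), chr_apply]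
        exact Finset.prod_congr rfl (fun j _ => (pow_mul _ _ _).symm)
      rw [h1, (Finset.mem_filter.mp ha).2]
    rw [Finset.sum_congr rfl this, ← Finset.sum_mul, hCsum, zero_mul]
  have hfg := IH _ hcard' (f - g) rfl ⟨e, hhom'⟩ hvan'
  have := Ideal.add_mem _ hfg hgmem
  simpa [sub_add_cancel] using this

end

end DegTorus

namespace DegTorus
noncomputable section
variable {K : Type} [Field K] [Fintype K] {v : Fin 3 → ℕ} {β : Kˣ}

lemma G0_card_le : (G0 K v β).card ≤ 3 := by
  letI := Classical.decEq (MvPolynomial (Fin 3) K)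
  have h : (G0 K v β) = insert (gen K v β 0) (insert (gen K v β 1) ({gen K v β 2} : Finset (MvPolynomial (Fin 3) K))) := rfl
  rw [h]
  refine le_trans (Finset.card_insert_le _ _) (Nat.succ_le_succ ?_)
  refine le_trans (Finset.card_insert_le _ _) (Nat.succ_le_succ ?_)
  simp

end
end DegTorus

open DegTorus in
/-- **Corollary.** For `n = 3`, the vanishing ideal `IX` of the degenerate projective
torus in `ℙ²` parameterized by `x_1^{v_1}, x_2^{v_2}, x_3^{v_3}` is minimally generated
by at most `3` binomials: there is a finite set `G` of at most three binomials generating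
`IX` such that no proper subset of `G` generates `IX`. -/
theorem vanishing_ideal_dim3_minimally_generated_by_three_binomials
    (K : Type) [Field K] [Fintype K]
    (v : Fin 3 → ℕ) (hv : ∀ i, 0 < v i)
    (β : Kˣ) (hβ : ∀ x : Kˣ, x ∈ Subgroup.zpowers β)
    (IX : Ideal (MvPolynomial (Fin 3) K))
    (hIX : IX = Ideal.span {f : MvPolynomial (Fin 3) K |
      (∃ e, f.IsHomogeneous e) ∧
      ∀ x : Fin 3 → Kˣ, eval (fun i => (x i : K) ^ v i) f = 0}) :
    ∃ G : Finset (MvPolynomial (Fin 3) K),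
      G.card ≤ 3 ∧
      (∀ f ∈ G, ∃ a b : Fin 3 → ℕ,
        f = (∏ j, X j ^ a j) - ∏ j, X j ^ b j) ∧
      Ideal.span (G : Set (MvPolynomial (Fin 3) K)) = IX ∧
      ∀ G' : Finset (MvPolynomial (Fin 3) K), G' ⊂ G →
        Ideal.span (G' : Set (MvPolynomial (Fin 3) K)) ≠ IX := by
  classical
  have hG0sub : ∀ f ∈ G0 K v β, f ∈ {f : MvPolynomial (Fin 3) K |
      (∃ e, f.IsHomogeneous e) ∧
      ∀ x : Fin 3 → Kˣ, eval (fun i => (x i : K) ^ v i) f = 0} := by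
    intro f hf
    have : f = gen K v β 0 ∨ f = gen K v β 1 ∨ f = gen K v β 2 := by
      simpa [G0, Finset.mem_insert] using hf
    rcases this with rfl | rfl | rfl <;>
      exact ⟨⟨_, gen_homog _⟩, fun x => gen_vanish hβ _ x⟩
  have hspan : Ideal.span ((G0 K v β : Finset (MvPolynomial (Fin 3) K)) : Set _) = IX := by
    apply le_antisymm
    · rw [hIX]
      exact Ideal.span_mono hG0sub
    · rw [hIX]
      apply Ideal.span_le.mpr
      intro f hf
      exact mem_span_of_vanish hβ _ f rfl hf.1 hf.2
  set s := (G0 K v β).powerset.filter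
    (fun G' => Ideal.span ((G' : Finset (MvPolynomial (Fin 3) K)) : Set _) = IX) with hs
  have hG0s : G0 K v β ∈ s :=
    Finset.mem_filter.mpr ⟨Finset.mem_powerset_self _, hspan⟩
  obtain ⟨G, hGs, hGmin⟩ := Finset.exists_min_image s Finset.card ⟨_, hG0s⟩
  obtain ⟨hGsub, hGspan⟩ := Finset.mem_filter.mp hGs
  rw [Finset.mem_powerset] at hGsub
  refine ⟨G, ?_, ?_, hGspan, ?_⟩
  · exact le_trans (Finset.card_le_card hGsub) (G0_card_le (v := v) (β := β))
  · intro f hf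
    have hf0 : f = gen K v β 0 ∨ f = gen K v β 1 ∨ f = gen K v β 2 := by
      simpa [G0, Finset.mem_insert] using hGsub hf
    rcases hf0 with rfl | rfl | rfl
    · exact ⟨sngl 0 (sc v β 0), addv v β 0, rfl⟩
    · exact ⟨sngl 1 (sc v β 1), addv v β 1, rfl⟩
    · exact ⟨sngl 2 (sc v β 2), addv v β 2, rfl⟩
  · intro G' hG' hspan'
    have hG'sub : G' ⊆ G0 K v β := (subset_of_ssubset hG').trans hGsub
    have hG's : G' ∈ s := Finset.mem_filter.mpr ⟨Finset.mem_powerset.mpr hG'sub, hspan'⟩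
    have h1 := hGmin G' hG's
    have h2 := Finset.card_lt_card hG'
    omega
end

section
/- Assume gcd(d_1, …, d_n) = 1. Then the lattice L = D(ker ψ) ⊆ ℤ^n is generated as a subgroup of ℤ^n by the vectors c_{ij}·e_i − c_{ij}·e_j for 1 ≤ i < j ≤ n, where c_{ij} = lcm(d_i, d_j), ψ: ℤ^n → ℤ is the ℤ-linear map with ψ(e_i) = d_i, and D: ℤ^n → ℤ^n is the ℤ-linear map with D(e_i) = d_i e_i. -/
private lemma nat_gcd_lcm_distrib (a c b : ℕ) :
    Nat.gcd (Nat.lcm a b) (Nat.lcm c b) = Nat.lcm (Nat.gcd a c) b := by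
  rcases eq_or_ne a 0 with rfl | ha
  · simp
  rcases eq_or_ne c 0 with rfl | hc
  · simp
  rcases eq_or_ne b 0 with rfl | hb
  · simp
  have hab := Nat.lcm_ne_zero ha hb
  have hcb := Nat.lcm_ne_zero hc hb
  have hac : Nat.gcd a c ≠ 0 := fun h => ha (Nat.eq_zero_of_gcd_eq_zero_left h)
  have h1 : Nat.gcd (Nat.lcm a b) (Nat.lcm c b) ≠ 0 :=
    fun h => hab (Nat.eq_zero_of_gcd_eq_zero_left h)
  have h2 : Nat.lcm (Nat.gcd a c) b ≠ 0 := Nat.lcm_ne_zero hac hb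
  apply Nat.dvd_antisymm
  · rw [← Nat.factorization_le_iff_dvd h1 h2, Nat.factorization_gcd hab hcb,
      Nat.factorization_lcm ha hb, Nat.factorization_lcm hc hb,
      Nat.factorization_lcm hac hb, Nat.factorization_gcd ha hc]
    intro p
    simp only [Finsupp.inf_apply, Finsupp.sup_apply]
    simp only [min_def, max_def]
    split_ifs <;> omega
  · rw [← Nat.factorization_le_iff_dvd h2 h1, Nat.factorization_gcd hab hcb,
      Nat.factorization_lcm ha hb, Nat.factorization_lcm hc hb,
      Nat.factorization_lcm hac hb, Nat.factorization_gcd ha hc]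
    intro p
    simp only [Finsupp.inf_apply, Finsupp.sup_apply]
    simp only [min_def, max_def]
    split_ifs <;> omega

private lemma finset_gcd_lcm {ι : Type*} [DecidableEq ι] (b : ℕ) (f : ι → ℕ) (T : Finset ι) :
    T.gcd (fun i => Nat.lcm (f i) b) = Nat.lcm (T.gcd f) b := by
  induction T using Finset.induction with
  | empty => simp
  | insert _ _ ha ih =>
    rw [Finset.gcd_insert, Finset.gcd_insert, ih]
    exact nat_gcd_lcm_distrib _ _ _

private lemma bezout_finset {ι : Type*} [DecidableEq ι] (f : ι → ℕ) (T : Finset ι) :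
    ∀ (v : ℤ), ((T.gcd f : ℕ) : ℤ) ∣ v →
      ∃ t : ι → ℤ, (∀ i ∉ T, t i = 0) ∧ ∑ i ∈ T, t i * (f i : ℤ) = v := by
  induction T using Finset.induction with
  | empty =>
    intro v hv
    refine ⟨fun _ => 0, fun _ _ => rfl, ?_⟩
    simp only [Finset.gcd_empty, Nat.cast_zero, zero_dvd_iff] at hv
    simp [hv]
  | @insert a T ha ih =>
    intro v hv
    rw [Finset.gcd_insert] at hv
    obtain ⟨k, hk⟩ := hv
    set g := T.gcd f with hg
    have hbez := Nat.gcd_eq_gcd_ab (f a) g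
    obtain ⟨t, ht0, hts⟩ := ih ((g : ℤ) * (Nat.gcdB (f a) g * k)) ⟨Nat.gcdB (f a) g * k, rfl⟩
    refine ⟨Function.update t a (Nat.gcdA (f a) g * k), ?_, ?_⟩
    · intro i hi
      have hia : i ≠ a := fun h => hi (h ▸ Finset.mem_insert_self a T)
      rw [Function.update_of_ne hia]
      exact ht0 i (fun h => hi (Finset.mem_insert_of_mem h))
    · rw [Finset.sum_insert ha, Function.update_self]
      have : ∑ i ∈ T, Function.update t a (Nat.gcdA (f a) g * k) i * (f i : ℤ)
          = ∑ i ∈ T, t i * (f i : ℤ) := by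
        apply Finset.sum_congr rfl
        intro i hi
        rw [Function.update_of_ne (by rintro rfl; exact ha hi)]
      rw [this, hts, hk]
      have hgcd : GCDMonoid.gcd (f a) g = Nat.gcd (f a) g := rfl
      rw [hgcd, hbez]
      ring

private lemma natCast_lcm_dvd {a b : ℕ} {z : ℤ} (h1 : (a : ℤ) ∣ z) (h2 : (b : ℤ) ∣ z) :
    ((Nat.lcm a b : ℕ) : ℤ) ∣ z := by
  rw [Int.natCast_dvd] at h1 h2 ⊢
  exact Nat.lcm_dvd h1 h2

/-- **Claim.** Let `d 1, …, d n` be positive integers with `gcd(d 1, …, d n) = 1`.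
Let `ψ : ℤⁿ → ℤ` be the map `e i ↦ d i` and `D : ℤⁿ → ℤⁿ` the map `e i ↦ d i • e i`.
Then the lattice `L = D (ker ψ)` is generated, as a subgroup of `ℤⁿ` (equivalently as a
`ℤ`-submodule), by the vectors `c_{ij} • e i - c_{ij} • e j` for `i < j`, where
`c_{ij} = lcm (d i) (d j)`. -/
theorem lattice_generated_by_lcm_differences
    (n : ℕ) (hn : 2 ≤ n)
    (d : Fin n → ℕ) (hd : ∀ i, 0 < d i)
    (hgcd : Finset.univ.gcd d = 1)
    (ψ : (Fin n → ℤ) →ₗ[ℤ] ℤ) (hψ : ∀ c, ψ c = ∑ i, c i * (d i : ℤ))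
    (D : (Fin n → ℤ) →ₗ[ℤ] (Fin n → ℤ)) (hD : ∀ c i, D c i = (d i : ℤ) * c i) :
    Submodule.map D (LinearMap.ker ψ) =
      Submodule.span ℤ {x : Fin n → ℤ | ∃ i j : Fin n, i < j ∧
        x = Pi.single i (Nat.lcm (d i) (d j) : ℤ) - Pi.single j (Nat.lcm (d i) (d j) : ℤ)} := by
  set S := Submodule.span ℤ {x : Fin n → ℤ | ∃ i j : Fin n, i < j ∧
        x = Pi.single i (Nat.lcm (d i) (d j) : ℤ) - Pi.single j (Nat.lcm (d i) (d j) : ℤ)}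
    with hSdef
  -- membership of the generators for every pair i ≠ j
  have hgen : ∀ i j : Fin n, i ≠ j →
      Pi.single i ((Nat.lcm (d i) (d j) : ℕ) : ℤ)
        - Pi.single j ((Nat.lcm (d i) (d j) : ℕ) : ℤ) ∈ S := by
    intro i j hij
    rcases lt_or_gt_of_ne hij with h | h
    · exact Submodule.subset_span ⟨i, j, h, rfl⟩
    · have hmem : Pi.single j ((Nat.lcm (d j) (d i) : ℕ) : ℤ)
          - Pi.single i ((Nat.lcm (d j) (d i) : ℕ) : ℤ) ∈ S :=
        Submodule.subset_span ⟨j, i, h, rfl⟩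
      have h2 := Submodule.neg_mem _ hmem
      rw [neg_sub] at h2
      rw [Nat.lcm_comm (d i) (d j)]
      exact h2
  -- key fact: d i * (lcm (d i) (d j) / d i) = lcm
  have hdL : ∀ i j : Fin n, (d i : ℤ) * ((Nat.lcm (d i) (d j) / d i : ℕ) : ℤ)
      = ((Nat.lcm (d i) (d j) : ℕ) : ℤ) := by
    intro i j
    rw [← Nat.cast_mul, Nat.mul_div_cancel' (Nat.dvd_lcm_left _ _)]
  apply le_antisymm
  · -- map D (ker ψ) ≤ S
    rintro x ⟨c, hc, rfl⟩
    have hker : ∑ i, (d i : ℤ) * c i = 0 := by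
      have h1 : ψ c = 0 := LinearMap.mem_ker.mp hc
      rw [hψ c] at h1
      rw [← h1]
      exact Finset.sum_congr rfl fun i _ => mul_comm _ _
    have hx : ⇑D c = fun i => (d i : ℤ) * c i := funext (hD c)
    rw [hx]
    clear hc hx
    -- main induction on the support
    have key : ∀ T : Finset (Fin n), ∀ c : Fin n → ℤ, (∀ i ∉ T, c i = 0) →
        (∑ i, (d i : ℤ) * c i) = 0 → (fun i => (d i : ℤ) * c i) ∈ S := by
      intro T
      induction T using Finset.strongInduction with
      | _ T ih =>
        intro c hc0 hsum
        rcases T.eq_empty_or_nonempty with rfl | ⟨j, hj⟩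
        · have hz : (fun i => (d i : ℤ) * c i) = 0 := by
            funext i
            simp [hc0 i (Finset.notMem_empty i)]
          rw [hz]; exact zero_mem _
        · set T' := T.erase j with hT'
          have hT'ss : T' ⊂ T := Finset.erase_ssubset hj
          have hsumT : ∑ i ∈ T, (d i : ℤ) * c i = 0 := by
            rw [← hsum]
            exact Finset.sum_subset (Finset.subset_univ T)
              (fun i _ hi => by rw [hc0 i hi, mul_zero])
          have hjc : (d j : ℤ) * c j = -∑ i ∈ T', (d i : ℤ) * c i := by
            have := Finset.add_sum_erase T (fun i => (d i : ℤ) * c i) hj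
            rw [← hT'] at this
            rw [hsumT] at this
            linarith
          -- divisibility
          have hd1 : ((T'.gcd d : ℕ) : ℤ) ∣ (d j : ℤ) * c j := by
            rw [hjc, dvd_neg]
            exact Finset.dvd_sum fun i hi =>
              Dvd.dvd.mul_right (Int.natCast_dvd_natCast.mpr (Finset.gcd_dvd hi)) _
          have hd2 : (d j : ℤ) ∣ (d j : ℤ) * c j := dvd_mul_right _ _
          have hdl : ((T'.gcd (fun i => Nat.lcm (d i) (d j)) : ℕ) : ℤ) ∣ -((d j : ℤ) * c j) := by
            rw [finset_gcd_lcm, dvd_neg]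
            exact natCast_lcm_dvd hd1 hd2
          obtain ⟨t, ht0, hts⟩ := bezout_finset (fun i => Nat.lcm (d i) (d j)) T' _ hdl
          -- new coefficient vector
          set c' : Fin n → ℤ := fun i =>
            if i = j then 0 else c i - t i * ((Nat.lcm (d i) (d j) / d i : ℕ) : ℤ) with hc'
          set L : Fin n → ℤ := fun i => ((Nat.lcm (d i) (d j) : ℕ) : ℤ) with hLdef
          have hxeq : (fun i => (d i : ℤ) * c i)
              = (fun i => (d i : ℤ) * c' i)
                + ∑ i ∈ T', t i • ((Pi.single i (L i) - Pi.single j (L i) : Fin n → ℤ)) := by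
            funext k
            have hCk : (∑ i ∈ T', t i • ((Pi.single i (L i) - Pi.single j (L i) : Fin n → ℤ))) k
                = (if k ∈ T' then t k * L k else 0)
                  + (if k = j then -(∑ i ∈ T', t i * L i) else 0) := by
              rw [Finset.sum_apply]
              by_cases hkj : k = j
              · subst hkj
                rw [if_neg (Finset.notMem_erase k T), if_pos rfl, zero_add,
                  ← Finset.sum_neg_distrib]
                refine Finset.sum_congr rfl fun i hi => ?_
                have hik : i ≠ k := Finset.ne_of_mem_erase hi
                simp [Pi.single_eq_of_ne (Ne.symm hik), Pi.single_eq_same, mul_comm]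
              · rw [if_neg hkj, add_zero]
                by_cases hkT : k ∈ T'
                · rw [if_pos hkT]
                  rw [Finset.sum_eq_single k]
                  · simp [Pi.single_eq_same, Pi.single_eq_of_ne hkj]
                  · intro i hi hik
                    simp [Pi.single_eq_of_ne (Ne.symm hik), Pi.single_eq_of_ne hkj]
                  · intro h; exact absurd hkT h
                · rw [if_neg hkT]
                  refine Finset.sum_eq_zero fun i hi => ?_
                  have hik : k ≠ i := fun h => hkT (h ▸ hi)
                  simp [Pi.single_eq_of_ne hik, Pi.single_eq_of_ne hkj]
            rw [Pi.add_apply, hCk]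
            by_cases hkj : k = j
            · subst hkj
              rw [if_neg (Finset.notMem_erase k T), if_pos rfl]
              have : c' k = 0 := by rw [hc']; simp
              rw [this, hts]
              ring
            · rw [if_neg hkj, add_zero]
              have hck : c' k = c k - t k * ((Nat.lcm (d k) (d j) / d k : ℕ) : ℤ) := by
                rw [hc']; simp [hkj]
              by_cases hkT : k ∈ T'
              · rw [if_pos hkT, hck]
                have hLk : L k = ((Nat.lcm (d k) (d j) : ℕ) : ℤ) := rfl
                rw [hLk]
                linear_combination t k * hdL k j
              · rw [if_neg hkT, add_zero, hck, ht0 k hkT]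
                ring
          rw [hxeq]
          refine Submodule.add_mem _ ?_ (Submodule.sum_mem _ fun i hi =>
            Submodule.smul_mem _ _ (hgen i j (Finset.ne_of_mem_erase hi)))
          apply ih T' hT'ss c'
          · intro i hi
            rw [hc']
            by_cases hij : i = j
            · simp [hij]
            · have hiT : i ∉ T := fun h => hi (Finset.mem_erase_of_ne_of_mem hij h)
              simp [hij, hc0 i hiT, ht0 i hi]
          · -- sum of new vector is zero
            have h2 := congrArg (fun f : Fin n → ℤ => ∑ k, f k) hxeq
            simp only [Pi.add_apply, Finset.sum_add_distrib, Finset.sum_apply] at h2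
            rw [hsum] at h2
            have h3 : ∑ k, ∑ i ∈ T', (t i • ((Pi.single i (L i) - Pi.single j (L i) : Fin n → ℤ))) k = 0 := by
              rw [Finset.sum_comm]
              refine Finset.sum_eq_zero fun i _ => ?_
              have : ∀ k, (t i • ((Pi.single i (L i) - Pi.single j (L i) : Fin n → ℤ))) k
                  = t i * ((Pi.single i (L i) : Fin n → ℤ) k) - t i * ((Pi.single j (L i) : Fin n → ℤ) k) := by
                intro k; simp [mul_sub]
              simp only [this, Finset.sum_sub_distrib, ← Finset.mul_sum]
              rw [Finset.sum_pi_single', Finset.sum_pi_single']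
              simp
            rw [h3, add_zero] at h2
            exact h2.symm
    exact key Finset.univ c (fun i hi => absurd (Finset.mem_univ i) hi) hker
  · -- S ≤ map D (ker ψ)
    rw [hSdef, Submodule.span_le]
    rintro x ⟨i, j, hij, rfl⟩
    have hij' : i ≠ j := ne_of_lt hij
    set c : Fin n → ℤ := Pi.single i ((Nat.lcm (d i) (d j) / d i : ℕ) : ℤ)
      - Pi.single j ((Nat.lcm (d i) (d j) / d j : ℕ) : ℤ) with hcdef
    have hsingle : ∀ (a : Fin n) (v : ℤ), ∑ k, (Pi.single a v : Fin n → ℤ) k * (d k : ℤ) = v * d a := by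
      intro a v
      rw [Finset.sum_eq_single a]
      · rw [Pi.single_eq_same]
      · intro b _ hb; rw [Pi.single_eq_of_ne hb, zero_mul]
      · intro h; exact absurd (Finset.mem_univ a) h
    have hker : ψ c = 0 := by
      rw [hψ c]
      have : ∀ k, c k * (d k : ℤ)
          = (Pi.single i ((Nat.lcm (d i) (d j) / d i : ℕ) : ℤ) : Fin n → ℤ) k * (d k : ℤ)
            - (Pi.single j ((Nat.lcm (d i) (d j) / d j : ℕ) : ℤ) : Fin n → ℤ) k * (d k : ℤ) := by
        intro k; rw [hcdef]; simp [sub_mul]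
      simp only [this, Finset.sum_sub_distrib, hsingle]
      rw [← Nat.cast_mul, ← Nat.cast_mul, Nat.div_mul_cancel (Nat.dvd_lcm_left _ _),
        Nat.div_mul_cancel (Nat.dvd_lcm_right _ _), sub_self]
    refine ⟨c, LinearMap.mem_ker.mpr hker, ?_⟩
    funext k
    rw [hD]
    rw [hcdef]
    simp only [Pi.sub_apply, Pi.single_apply]
    split_ifs with h1 h2 h2
    · exact absurd (h1 ▸ h2 : i = j) hij'
    · subst h1
      rw [sub_zero, sub_zero, ← Nat.cast_mul, Nat.mul_div_cancel' (Nat.dvd_lcm_left _ _)]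
    · subst h2
      rw [zero_sub, zero_sub, mul_neg, ← Nat.cast_mul,
        Nat.mul_div_cancel' (Nat.dvd_lcm_right _ _)]
    · simp
end
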